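/- If G is a group of order 60 with a unique (normal) Sylow 3-subgroup, then G has a unique Sylow 5-subgroup. -/

import Mathlib

open Subgroup

lemma sylow_normal_of_card_eq_one {p : ℕ} {G : Type*} [Group G] [Fact p.Prime]
    (P : Sylow p G) (h : Nat.card (Sylow p G) = 1) : (P : Subgroup G).Normal := by
  have hsub : Subsingleton (Sylow p G) := (Nat.card_eq_one_iff_unique.mp h).1
  rw [← normalizer_eq_top_iff, eq_top_iff']
  intro g
  exact Sylow.smul_eq_iff_mem_normalizer.mp (Subsingleton.elim _ _)

lemma fact_aux {p m : ℕ} (hp : p.Prime) (h : ¬ p ∣ m) (hm : m ≠ 0) :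
    Nat.factorization (p * m) p = 1 := by
  rw [Nat.factorization_mul hp.ne_zero hm, Finsupp.add_apply,
    hp.factorization_self, Nat.factorization_eq_zero_of_not_dvd h]

theorem order_60_unique_sylow3_unique_sylow5 (G : Type*) [Group G] [Fintype G]
    (hG : Fintype.card G = 60) (h3 : Nat.card (Sylow 3 G) = 1) :
    Nat.card (Sylow 5 G) = 1 := by
  have hcard : Nat.card G = 60 := by rw [Nat.card_eq_fintype_card, hG]
  haveI : Fact (Nat.Prime 3) := ⟨by norm_num⟩
  haveI : Fact (Nat.Prime 5) := ⟨by norm_num⟩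
  obtain ⟨P⟩ : Nonempty (Sylow 3 G) := inferInstance
  obtain ⟨Q⟩ : Nonempty (Sylow 5 G) := inferInstance
  have hPnorm : (P : Subgroup G).Normal := sylow_normal_of_card_eq_one P h3
  have hPcard : Nat.card (P : Subgroup G) = 3 := by
    rw [Sylow.card_eq_multiplicity, hcard, show (60:ℕ) = 3 * 20 by norm_num,
      fact_aux (by norm_num) (by norm_num) (by norm_num)]; ring
  have hQcard : Nat.card (Q : Subgroup G) = 5 := by
    rw [Sylow.card_eq_multiplicity, hcard, show (60:ℕ) = 5 * 12 by norm_num,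
      fact_aux (by norm_num) (by norm_num) (by norm_num)]; ring
  -- N = QP has order 15
  set N : Subgroup G := (Q : Subgroup G) ⊔ (P : Subgroup G) with hN
  have hPQbot : (P : Subgroup G) ⊓ (Q : Subgroup G) = ⊥ :=
    inf_eq_bot_of_coprime (by rw [hPcard, hQcard]; decide)
  have hrel : (P : Subgroup G).relIndex N = 5 := by
    rw [hN, relIndex_sup_right, ← inf_relIndex_right, hPQbot, relIndex_bot_left, hQcard]
  have hPN : (P : Subgroup G) ≤ N := le_sup_right
  have hQN : (Q : Subgroup G) ≤ N := le_sup_left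
  have hNcard : Nat.card N = 15 := by
    have h1 : Nat.card ((P : Subgroup G).subgroupOf N) * ((P : Subgroup G).subgroupOf N).index
        = Nat.card N := card_mul_index _
    have h2 : Nat.card ((P : Subgroup G).subgroupOf N) = Nat.card (P : Subgroup G) :=
      Nat.card_congr (subgroupOfEquivOfLe hPN).toEquiv
    rw [h2, hPcard] at h1
    have : ((P : Subgroup G).subgroupOf N).index = 5 := hrel
    rw [this] at h1
    omega
  -- the Sylow 5-subgroup of N
  let Q' : Sylow 5 N := Q.subtype hQN
  have hQ'card : Nat.card (Q' : Subgroup N) = 5 := by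
    rw [Sylow.card_eq_multiplicity, hNcard, show (15:ℕ) = 5 * 3 by norm_num,
      fact_aux (by norm_num) (by norm_num) (by norm_num)]; ring
  have hQ'idx : (Q' : Subgroup N).index = 3 := by
    have := card_mul_index (Q' : Subgroup N)
    rw [hQ'card, hNcard] at this
    omega
  have hN5 : Nat.card (Sylow 5 N) = 1 := by
    have hdvd : Nat.card (Sylow 5 N) ∣ 3 := hQ'idx ▸ Q'.card_dvd_index
    have hmod : Nat.card (Sylow 5 N) ≡ 1 [MOD 5] := card_sylow_modEq_one 5 N
    have hle := Nat.le_of_dvd (by norm_num) hdvd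
    have hpos := Nat.pos_of_dvd_of_pos hdvd (by norm_num)
    interval_cases h : Nat.card (Sylow 5 N) <;> simp_all [Nat.ModEq]
  have hQ'norm : (Q' : Subgroup N).Normal := sylow_normal_of_card_eq_one Q' hN5
  -- N ≤ normalizer of Q
  have hNnorm : N ≤ normalizer ((Q : Subgroup G) : Set G) := by
    intro g hg
    rw [mem_normalizer_iff]
    intro x
    constructor
    · intro hx
      have : (⟨g, hg⟩ : N) * ⟨x, hQN hx⟩ * (⟨g, hg⟩ : N)⁻¹ ∈ (Q' : Subgroup N) :=
        hQ'norm.conj_mem ⟨x, hQN hx⟩ hx ⟨g, hg⟩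
      exact this
    · intro hx
      have hgxg : g * x * g⁻¹ ∈ N := hQN hx
      have hxN : x ∈ N := by
        have := mul_mem (mul_mem (inv_mem hg) hgxg) hg
        simpa [mul_assoc] using this
      have : (⟨g, hg⟩ : N)⁻¹ * ⟨g * x * g⁻¹, hgxg⟩ * (⟨g, hg⟩ : N) ∈ (Q' : Subgroup N) := by
        have := hQ'norm.conj_mem ⟨g * x * g⁻¹, hgxg⟩ hx (⟨g, hg⟩ : N)⁻¹
        simpa using this
      have hx' : (⟨x, hxN⟩ : N) ∈ (Q' : Subgroup N) := by
        convert this using 1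
        ext
        simp [mul_assoc]
      exact hx'
  -- conclude
  have hidx : Nat.card (Sylow 5 G) ∣ N.index := by
    rw [Q.card_eq_index_normalizer]
    exact index_dvd_of_le hNnorm
  have hNidx : N.index = 4 := by
    have := card_mul_index N
    rw [hNcard, hcard] at this
    omega
  rw [hNidx] at hidx
  have hmod : Nat.card (Sylow 5 G) ≡ 1 [MOD 5] := card_sylow_modEq_one 5 G
  have hle := Nat.le_of_dvd (by norm_num) hidx
  have hpos := Nat.pos_of_dvd_of_pos hidx (by norm_num)
  interval_cases h : Nat.card (Sylow 5 G) <;> simp_all [Nat.ModEq]
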